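/- Let T be a nonnegative random variable and N(T) the mixed Poisson random variable with mixing distribution T. For every n ∈ ℕ, the n-th moment E[T^n] is finite if and only if the n-th moment E[N(T)^n] is finite. -/

import Mathlib

open MeasureTheory ProbabilityTheory Filter Topology
open scoped ENNReal NNReal Nat

lemma aux_pow_le (n k : ℕ) : k ^ n ≤ 2 ^ n * k.descFactorial n + (2 * n) ^ n := by
  rcases le_or_gt k (2 * n) with h | h
  · calc k ^ n ≤ (2 * n) ^ n := Nat.pow_le_pow_left h n
      _ ≤ _ := Nat.le_add_left _ _
  · have hle : k ^ n ≤ 2 ^ n * k.descFactorial n := by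
      have h2 : (2:ℕ) ^ n * k.descFactorial n = ∏ i ∈ Finset.range n, 2 * (k - i) := by
        rw [Nat.descFactorial_eq_prod_range, Finset.prod_mul_distrib, Finset.prod_const,
          Finset.card_range]
      have hk : (k:ℕ) ^ n = ∏ _i ∈ Finset.range n, k := by
        rw [Finset.prod_const, Finset.card_range]
      rw [h2, hk]
      refine Finset.prod_le_prod' fun i hi => ?_
      have : i < n := Finset.mem_range.mp hi
      omega
    omega

lemma aux_sum_one (r : ℝ≥0) :
    ∑' k, ENNReal.ofReal (poissonPMFReal r k) = 1 := by
  rw [← ENNReal.ofReal_tsum_of_nonneg (fun _ => poissonPMFReal_nonneg)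
      (poissonPMFRealSum r).summable,
      show ∑' n, poissonPMFReal r n = 1 from (poissonPMFRealSum r).tsum_eq, ENNReal.ofReal_one]

lemma aux_sum_desc (r : ℝ≥0) (n : ℕ) :
    ∑' k, (k.descFactorial n : ℝ≥0∞) * ENNReal.ofReal (poissonPMFReal r k)
      = ENNReal.ofReal ((r : ℝ) ^ n) := by
  have hinj : Function.Injective (fun j : ℕ => j + n) := add_left_injective n
  have hsupp : Function.support
      (fun k : ℕ => (k.descFactorial n : ℝ≥0∞) * ENNReal.ofReal (poissonPMFReal r k))
      ⊆ Set.range (fun j : ℕ => j + n) := by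
    intro k hk
    by_contra hr
    have hkn : k < n := by
      by_contra h; exact hr ⟨k - n, show k - n + n = k by omega⟩
    exact hk (by simp [Nat.descFactorial_eq_zero_iff_lt.mpr hkn])
  rw [← hinj.tsum_eq hsupp]
  have hterm : ∀ j : ℕ,
      (((j + n).descFactorial n : ℝ≥0∞)) * ENNReal.ofReal (poissonPMFReal r (j + n))
        = ENNReal.ofReal ((r : ℝ) ^ n) * ENNReal.ofReal (poissonPMFReal r j) := by
    intro j
    rw [← ENNReal.ofReal_natCast, ← ENNReal.ofReal_mul (by positivity),
      ← ENNReal.ofReal_mul (by positivity)]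
    congr 1
    have hD : ((j)! : ℝ) * ((j + n).descFactorial n : ℝ) = ((j + n)! : ℝ) := by
      exact_mod_cast congrArg (Nat.cast : ℕ → ℝ)
        (by simpa using Nat.factorial_mul_descFactorial (show n ≤ j + n from le_add_self))
    unfold poissonPMFReal
    have h1 : ((j + n)! : ℝ) ≠ 0 := Nat.cast_ne_zero.mpr (Nat.factorial_ne_zero _)
    have h2 : ((j)! : ℝ) ≠ 0 := Nat.cast_ne_zero.mpr (Nat.factorial_ne_zero _)
    rw [pow_add]
    field_simp
    linear_combination ((r:ℝ) ^ j * (r:ℝ) ^ n) * hD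
  calc ∑' j, (fun k : ℕ => (k.descFactorial n : ℝ≥0∞) * ENNReal.ofReal (poissonPMFReal r k))
        ((fun j : ℕ => j + n) j)
      = ∑' j, ENNReal.ofReal ((r : ℝ) ^ n) * ENNReal.ofReal (poissonPMFReal r j) :=
        tsum_congr fun j => hterm j
    _ = _ := by rw [ENNReal.tsum_mul_left, aux_sum_one r, mul_one]

theorem mixedPoisson_moment_finite_iff
    {Ω : Type*} [MeasureSpace Ω] [IsProbabilityMeasure (ℙ : Measure Ω)]
    (T : Ω → ℝ) (hT : Measurable T) (hT0 : ∀ ω, 0 ≤ T ω)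
    (N : Ω → ℕ) (hN : Measurable N)
    (hmix : ∀ k : ℕ, (ℙ {ω | N ω = k}).toReal =
      ∫ ω, Real.exp (-(T ω)) * (T ω) ^ k / (Nat.factorial k : ℝ) ∂ℙ)
    (n : ℕ) :
    Integrable (fun ω => (T ω) ^ n) ℙ ↔ Integrable (fun ω => (N ω : ℝ) ^ n) ℙ := by
  classical
  have hcoe : ∀ ω, (((T ω).toNNReal : ℝ)) = T ω := fun ω => Real.coe_toNNReal _ (hT0 ω)
  set f : ℕ → Ω → ℝ≥0∞ :=
    fun k ω => ENNReal.ofReal (poissonPMFReal (T ω).toNNReal k) with hf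
  have hfval : ∀ k ω,
      f k ω = ENNReal.ofReal (Real.exp (-(T ω)) * (T ω) ^ k / (Nat.factorial k : ℝ)) := by
    intro k ω
    simp only [hf, poissonPMFReal, hcoe ω]
  have hfmeas : ∀ k, Measurable (f k) := by
    intro k
    have : f k = fun ω =>
        ENNReal.ofReal (Real.exp (-(T ω)) * (T ω) ^ k / (Nat.factorial k : ℝ)) :=
      funext (hfval k)
    rw [this]
    exact ((hT.neg.exp.mul (hT.pow_const k)).div_const _).ennreal_ofReal
  -- each pmf value is at most 1
  have hle1 : ∀ k ω, poissonPMFReal (T ω).toNNReal k ≤ 1 :=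
    fun k ω => le_hasSum (poissonPMFRealSum (T ω).toNNReal) k
      (fun _ _ => poissonPMFReal_nonneg)
  have hInt : ∀ k, Integrable
      (fun ω => Real.exp (-(T ω)) * (T ω) ^ k / (Nat.factorial k : ℝ)) ℙ := by
    intro k
    refine ⟨((hT.neg.exp.mul (hT.pow_const k)).div_const _).aestronglyMeasurable,
      HasFiniteIntegral.of_bounded (C := 1) (ae_of_all _ fun ω => ?_)⟩
    rw [Real.norm_of_nonneg (div_nonneg (mul_nonneg (Real.exp_nonneg _)
      (pow_nonneg (hT0 ω) _)) (Nat.cast_nonneg _))]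
    have := hle1 k ω
    simpa only [poissonPMFReal, hcoe ω] using this
  have hkey : ∀ k, ℙ {ω | N ω = k} = ∫⁻ ω, f k ω ∂ℙ := by
    intro k
    rw [← ENNReal.ofReal_toReal (measure_ne_top ℙ {ω | N ω = k}), hmix k,
      ofReal_integral_eq_lintegral_ofReal (hInt k)
        (ae_of_all _ fun ω => div_nonneg (mul_nonneg (Real.exp_nonneg _)
          (pow_nonneg (hT0 ω) _)) (Nat.cast_nonneg _))]
    exact lintegral_congr fun ω => (hfval k ω).symm
  -- the n-th moment of N as a sum
  have hLN : ∫⁻ ω, ((N ω : ℝ≥0∞)) ^ n ∂ℙ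
      = ∑' k : ℕ, (k : ℝ≥0∞) ^ n * ℙ {ω | N ω = k} := by
    have hmg : Measurable fun k : ℕ => (k : ℝ≥0∞) ^ n := by measurability
    have h1 : ∫⁻ ω, ((N ω : ℝ≥0∞)) ^ n ∂ℙ
        = ∫⁻ k, (k : ℝ≥0∞) ^ n ∂(Measure.map N ℙ) := (lintegral_map hmg hN).symm
    rw [h1, lintegral_countable']
    refine tsum_congr fun k => ?_
    rw [Measure.map_apply hN (measurableSet_singleton k)]
    rfl
  -- rewrite as a lintegral of the pointwise series
  set S : Ω → ℝ≥0∞ := fun ω => ∑' k : ℕ, (k : ℝ≥0∞) ^ n * f k ω with hS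
  have hLNS : ∫⁻ ω, ((N ω : ℝ≥0∞)) ^ n ∂ℙ = ∫⁻ ω, S ω ∂ℙ := by
    rw [hLN]
    calc ∑' k : ℕ, (k : ℝ≥0∞) ^ n * ℙ {ω | N ω = k}
        = ∑' k : ℕ, ∫⁻ ω, (k : ℝ≥0∞) ^ n * f k ω ∂ℙ := by
          refine tsum_congr fun k => ?_
          rw [hkey k, lintegral_const_mul _ (hfmeas k)]
      _ = ∫⁻ ω, S ω ∂ℙ := by
          rw [← lintegral_tsum fun k => (((hfmeas k).const_mul _)).aemeasurable]
  -- pointwise bounds for S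
  have hdesc : ∀ ω, ∑' k : ℕ, (k.descFactorial n : ℝ≥0∞) * f k ω
      = ENNReal.ofReal ((T ω) ^ n) := by
    intro ω
    have := aux_sum_desc (T ω).toNNReal n
    rwa [hcoe ω] at this
  have hone : ∀ ω, ∑' k : ℕ, f k ω = 1 := fun ω => aux_sum_one (T ω).toNNReal
  have hlow : ∀ ω, ENNReal.ofReal ((T ω) ^ n) ≤ S ω := by
    intro ω
    rw [← hdesc ω]
    refine ENNReal.tsum_le_tsum fun k => mul_le_mul_left ?_ _
    have h1 : ((k.descFactorial n : ℕ) : ℝ≥0∞) ≤ ((k ^ n : ℕ) : ℝ≥0∞) :=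
      Nat.cast_le.mpr (Nat.descFactorial_le_pow k n)
    push_cast at h1
    exact h1
  have hup : ∀ ω, S ω ≤ 2 ^ n * ENNReal.ofReal ((T ω) ^ n) + ((2 * n : ℕ) : ℝ≥0∞) ^ n := by
    intro ω
    have h1 : ∀ k : ℕ, (k : ℝ≥0∞) ^ n
        ≤ 2 ^ n * (k.descFactorial n : ℝ≥0∞) + ((2 * n : ℕ) : ℝ≥0∞) ^ n := by
      intro k
      have := aux_pow_le n k
      have h2 : ((k ^ n : ℕ) : ℝ≥0∞)
          ≤ ((2 ^ n * k.descFactorial n + (2 * n) ^ n : ℕ) : ℝ≥0∞) := Nat.cast_le.mpr this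
      push_cast at h2
      push_cast
      exact h2
    calc S ω ≤ ∑' k : ℕ, (2 ^ n * (k.descFactorial n : ℝ≥0∞)
          + ((2 * n : ℕ) : ℝ≥0∞) ^ n) * f k ω :=
        ENNReal.tsum_le_tsum fun k => mul_le_mul_left (h1 k) _
      _ = 2 ^ n * ∑' k : ℕ, (k.descFactorial n : ℝ≥0∞) * f k ω
          + ((2 * n : ℕ) : ℝ≥0∞) ^ n * ∑' k : ℕ, f k ω := by
        simp_rw [add_mul, ENNReal.tsum_add, mul_assoc, ENNReal.tsum_mul_left]
      _ = _ := by rw [hdesc ω, hone ω, mul_one]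
  -- integrate the bounds
  have hTn_meas : Measurable fun ω => ENNReal.ofReal ((T ω) ^ n) :=
    (hT.pow_const n).ennreal_ofReal
  have hLTle : ∫⁻ ω, ENNReal.ofReal ((T ω) ^ n) ∂ℙ ≤ ∫⁻ ω, S ω ∂ℙ :=
    lintegral_mono hlow
  have hLNle : ∫⁻ ω, S ω ∂ℙ
      ≤ 2 ^ n * ∫⁻ ω, ENNReal.ofReal ((T ω) ^ n) ∂ℙ + ((2 * n : ℕ) : ℝ≥0∞) ^ n := by
    calc ∫⁻ ω, S ω ∂ℙ
        ≤ ∫⁻ ω, (2 ^ n * ENNReal.ofReal ((T ω) ^ n) + ((2 * n : ℕ) : ℝ≥0∞) ^ n) ∂ℙ :=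
          lintegral_mono hup
      _ = _ := by
        rw [lintegral_add_right _ measurable_const, lintegral_const_mul _ hTn_meas,
          lintegral_const, measure_univ, mul_one]
  -- conclude
  have hTm : AEStronglyMeasurable (fun ω => (T ω) ^ n) ℙ :=
    (hT.pow_const n).aestronglyMeasurable
  have hNm : AEStronglyMeasurable (fun ω => ((N ω : ℝ)) ^ n) ℙ :=
    (((measurable_from_top.comp hN : Measurable fun ω => ((N ω : ℝ))).pow_const n)).aestronglyMeasurable
  rw [← lintegral_ofReal_ne_top_iff_integrable hTm (ae_of_all _ fun ω => pow_nonneg (hT0 ω) n),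
    ← lintegral_ofReal_ne_top_iff_integrable hNm (ae_of_all _ fun ω => by positivity)]
  have hNof : ∫⁻ ω, ENNReal.ofReal (((N ω : ℝ)) ^ n) ∂ℙ = ∫⁻ ω, ((N ω : ℝ≥0∞)) ^ n ∂ℙ := by
    refine lintegral_congr fun ω => ?_
    rw [ENNReal.ofReal_pow (by positivity), ENNReal.ofReal_natCast]
  rw [hNof, hLNS]
  constructor
  · intro h
    refine ne_top_of_le_ne_top ?_ hLNle
    exact ENNReal.add_ne_top.mpr ⟨ENNReal.mul_ne_top (by simp) h,
      ENNReal.pow_ne_top (ENNReal.natCast_ne_top _)⟩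
  · intro h
    exact ne_top_of_le_ne_top h hLTle
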